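/- Let α ∈ {+1, −1}, and let A and A + α Z Zᵀ be n×n real symmetric positive definite matrices, where Z is n×k. Let V = A⁻¹ Z (I_k + α Zᵀ A⁻¹ Z)^{−1/2}. Suppose C is an n×n symmetric positive semidefinite matrix satisfying A^{−1/2} C + C A^{−1/2} − α C² = V Vᵀ and such that A^{−1/2} − α C is positive definite. Then A^{−1/2} − α C = (A + α Z Zᵀ)^{−1/2}. -/

import Mathlib

open Matrix

open scoped ComplexOrder in
/-- The positive semidefinite square root of a positive semidefinite matrix
(the definition `Matrix.PosSemidef.sqrt` of the older Mathlib, since removed). -/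
noncomputable def Matrix.PosSemidef.sqrt {n 𝕜 : Type*} [Fintype n] [DecidableEq n] [RCLike 𝕜]
    {A : Matrix n n 𝕜} (hA : A.PosSemidef) : Matrix n n 𝕜 :=
  hA.1.eigenvectorUnitary.1 * diagonal ((↑) ∘ Real.sqrt ∘ hA.1.eigenvalues) *
  (star hA.1.eigenvectorUnitary : Matrix n n 𝕜)

open scoped ComplexOrder MatrixOrder in
theorem Matrix.PosSemidef.sqrt_eq_cfc' {n 𝕜 : Type*} [Fintype n] [DecidableEq n] [RCLike 𝕜]
    {A : Matrix n n 𝕜} (hA : A.PosSemidef) : hA.sqrt = CFC.sqrt A := by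
  rw [CFC.sqrt_eq_cfc, cfc_nnreal_eq_real _ A, hA.1.cfc_eq, IsHermitian.cfc,
    Unitary.conjStarAlgAut_apply, Matrix.PosSemidef.sqrt]
  congr 3
  funext i
  simp [max_eq_left (hA.eigenvalues_nonneg i)]

open scoped ComplexOrder MatrixOrder in
theorem Matrix.PosSemidef.sqrt_mul_self {n 𝕜 : Type*} [Fintype n] [DecidableEq n] [RCLike 𝕜]
    {A : Matrix n n 𝕜} (hA : A.PosSemidef) : hA.sqrt * hA.sqrt = A := by
  rw [hA.sqrt_eq_cfc']
  exact CFC.sqrt_mul_sqrt_self A hA.nonneg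

open scoped ComplexOrder MatrixOrder in
theorem Matrix.PosSemidef.posSemidef_sqrt {n 𝕜 : Type*} [Fintype n] [DecidableEq n] [RCLike 𝕜]
    {A : Matrix n n 𝕜} (hA : A.PosSemidef) : hA.sqrt.PosSemidef := by
  rw [hA.sqrt_eq_cfc']
  exact (CFC.sqrt_nonneg A).posSemidef

open scoped ComplexOrder MatrixOrder in
theorem Matrix.PosSemidef.eq_sqrt_of_sq_eq {n 𝕜 : Type*} [Fintype n] [DecidableEq n] [RCLike 𝕜]
    {A B : Matrix n n 𝕜} (hA : A.PosSemidef) (hB : B.PosSemidef) (hAB : A ^ 2 = B) :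
    A = hB.sqrt := by
  rw [hB.sqrt_eq_cfc', ← hAB, CFC.sqrt_sq A hA.nonneg]

theorem riccati_solution_is_inv_sqrt_correction {n k : ℕ} (α : ℝ) (hα : α = 1 ∨ α = -1)
    (A : Matrix (Fin n) (Fin n) ℝ) (Z : Matrix (Fin n) (Fin k) ℝ)
    (hA : A.PosDef) (hB : (A + α • (Z * Zᵀ)).PosDef)
    (h : ((1 : Matrix (Fin k) (Fin k) ℝ) + α • (Zᵀ * A⁻¹ * Z)).PosDef)
    (C : Matrix (Fin n) (Fin n) ℝ) (hC : C.PosSemidef)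
    (heq : (hA.posSemidef.sqrt)⁻¹ * C + C * (hA.posSemidef.sqrt)⁻¹ - α • C ^ 2 =
      (A⁻¹ * Z * (h.posSemidef.sqrt)⁻¹) * (A⁻¹ * Z * (h.posSemidef.sqrt)⁻¹)ᵀ)
    (hpos : ((hA.posSemidef.sqrt)⁻¹ - α • C).PosDef) :
    (hA.posSemidef.sqrt)⁻¹ - α • C = (hB.posSemidef.sqrt)⁻¹ := by
  have hα2 : α * α = 1 := by rcases hα with h' | h' <;> rw [h'] <;> norm_num
  have hα0 : α ≠ 0 := by rcases hα with h' | h' <;> rw [h'] <;> norm_num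
  set S := hA.posSemidef.sqrt with hSdef
  set M := (1 : Matrix (Fin k) (Fin k) ℝ) + α • (Zᵀ * A⁻¹ * Z) with hMdef
  set W := h.posSemidef.sqrt with hWdef
  set B := A + α • (Z * Zᵀ) with hBdef
  have hSS : S * S = A := hA.posSemidef.sqrt_mul_self
  have hWW : W * W = M := h.posSemidef.sqrt_mul_self
  have hAdet : IsUnit A.det := isUnit_iff_ne_zero.mpr (ne_of_gt hA.det_pos)
  have hBdet : IsUnit B.det := isUnit_iff_ne_zero.mpr (ne_of_gt hB.det_pos)
  have hMdet : IsUnit M.det := isUnit_iff_ne_zero.mpr (ne_of_gt h.det_pos)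
  have hWt : Wᵀ = W := by
    have := h.posSemidef.posSemidef_sqrt.isHermitian
    simpa [Matrix.IsHermitian] using this
  have hAt : Aᵀ = A := by simpa [Matrix.IsHermitian] using hA.isHermitian
  have hAit : (A⁻¹)ᵀ = A⁻¹ := by rw [Matrix.transpose_nonsing_inv, hAt]
  -- V Vᵀ = A⁻¹ Z M⁻¹ Zᵀ A⁻¹
  have hVVt : (A⁻¹ * Z * W⁻¹) * (A⁻¹ * Z * W⁻¹)ᵀ = A⁻¹ * Z * M⁻¹ * Zᵀ * A⁻¹ := by
    rw [Matrix.transpose_mul, Matrix.transpose_mul, Matrix.transpose_nonsing_inv, hWt, hAit,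
      ← hWW, Matrix.mul_inv_rev]
    simp [Matrix.mul_assoc]
  -- inverse of α • 1
  have hα1inv : (α • (1 : Matrix (Fin k) (Fin k) ℝ))⁻¹ = α • 1 := by
    apply Matrix.inv_eq_right_inv
    rw [Matrix.smul_mul, Matrix.mul_smul, smul_smul, hα2, one_mul, one_smul]
  have hα1det : IsUnit (α • (1 : Matrix (Fin k) (Fin k) ℝ)).det := by
    rw [Matrix.det_smul, Matrix.det_one, mul_one]
    exact isUnit_iff_ne_zero.mpr (pow_ne_zero _ hα0)
  have hαM : α • (1 : Matrix (Fin k) (Fin k) ℝ) + Zᵀ * A⁻¹ * Z = α • M := by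
    rw [hMdef]
    rw [smul_add α (1 : Matrix (Fin k) (Fin k) ℝ), smul_smul, hα2, one_smul]
  have hαMinv : (α • M)⁻¹ = α • M⁻¹ := by
    apply Matrix.inv_eq_right_inv
    rw [Matrix.smul_mul, Matrix.mul_smul, smul_smul, hα2, one_smul,
      Matrix.mul_nonsing_inv _ hMdet]
  -- Woodbury
  have hwood : B⁻¹ = A⁻¹ - α • (A⁻¹ * Z * M⁻¹ * Zᵀ * A⁻¹) := by
    have hB' : B = A + Z * (α • (1 : Matrix (Fin k) (Fin k) ℝ)) * Zᵀ := by
      rw [hBdef]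
      congr 1
      simp [Matrix.mul_smul, Matrix.smul_mul]
    rw [hB', Matrix.add_mul_mul_inv_eq_sub A Z (α • 1) Zᵀ
      ((Matrix.isUnit_iff_isUnit_det A).mpr hAdet)
      ((Matrix.isUnit_iff_isUnit_det _).mpr hα1det)
      (by
        rw [Matrix.isUnit_iff_isUnit_det, hα1inv, hαM, Matrix.det_smul]
        exact (isUnit_iff_ne_zero.mpr (pow_ne_zero _ hα0)).mul hMdet),
      hα1inv, hαM, hαMinv]
    rw [Matrix.mul_smul, Matrix.smul_mul, Matrix.smul_mul]
  -- X² = B⁻¹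
  have hSinv2 : S⁻¹ * S⁻¹ = A⁻¹ := by rw [← Matrix.mul_inv_rev, hSS]
  have hX2 : (S⁻¹ - α • C) * (S⁻¹ - α • C) = B⁻¹ := by
    rw [hwood, ← hVVt, ← heq]
    rw [Matrix.sub_mul, Matrix.mul_sub, Matrix.mul_sub, hSinv2, Matrix.smul_mul,
      Matrix.mul_smul, Matrix.smul_mul, Matrix.mul_smul, smul_smul, hα2, one_smul]
    rw [smul_sub α, smul_add α, smul_smul, hα2, one_smul, pow_two]
    abel
  -- conclude via uniqueness of sqrt
  have hXdet : IsUnit (S⁻¹ - α • C).det := isUnit_iff_ne_zero.mpr (ne_of_gt hpos.det_pos)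
  have hXinv2 : (S⁻¹ - α • C)⁻¹ ^ 2 = B := by
    rw [pow_two, ← Matrix.mul_inv_rev, hX2, Matrix.nonsing_inv_nonsing_inv _ hBdet]
  have := hpos.inv.posSemidef.eq_sqrt_of_sq_eq hB.posSemidef hXinv2
  rw [← this, Matrix.nonsing_inv_nonsing_inv _ hXdet]
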